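/- For every n ≥ 1 and every u ∈ ℝⁿ with |u| ≤ 2, the Lebesgue measure of the lens-shaped region {v ∈ ℝⁿ : |v − u/2| ≤ 1 and |v + u/2| ≤ 1} (the intersection of the two closed unit balls centered at u/2 and −u/2) equals (π^{n/2} / Γ(n/2 + 1)) · I_{1−|u|²/4}((n+1)/2, 1/2). -/

import Mathlib

open MeasureTheory Metric Filter Topology Real

/-- The incomplete Beta function `B_x(a, b) = ∫₀ˣ t^(a-1) (1-t)^(b-1) dt`. -/
noncomputable def incBeta (x a b : ℝ) : ℝ :=
  ∫ t in (0 : ℝ)..x, t ^ (a - 1) * (1 - t) ^ (b - 1)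

/-- The (complete) Beta function `B(a, b) = Γ(a)Γ(b)/Γ(a+b)`. -/
noncomputable def betaFn (a b : ℝ) : ℝ :=
  Real.Gamma a * Real.Gamma b / Real.Gamma (a + b)

/-- The regularized incomplete Beta function `I_x(a, b) = B_x(a,b)/B(a,b)`. -/
noncomputable def regIncBeta (x a b : ℝ) : ℝ :=
  incBeta x a b / betaFn a b

lemma sliceVol (m : ℕ) {c : ℝ} (hc : 0 ≤ c) :
    volume {y : Fin m → ℝ | ∑ i, y i ^ 2 ≤ c} =
      ENNReal.ofReal (Real.sqrt c ^ m * (Real.sqrt π ^ m / Real.Gamma ((m : ℝ) / 2 + 1))) := by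
  cases m with
  | zero =>
      have h1 : {y : Fin 0 → ℝ | ∑ i, y i ^ 2 ≤ c} = Set.univ := by
        ext y; simp [hc]
      rw [h1, volume_pi, Measure.pi_univ]
      simp [Real.Gamma_one]
  | succ m =>
      have hset : ((MeasurableEquiv.toLp 2 (Fin (m+1) → ℝ)).symm) ⁻¹'
          {y : Fin (m+1) → ℝ | ∑ i, y i ^ 2 ≤ c} = closedBall 0 (Real.sqrt c) := by
        ext v
        have : ‖v‖ ≤ Real.sqrt c ↔ ∑ i, v i ^ 2 ≤ c := by
          rw [EuclideanSpace.norm_eq, Real.sqrt_le_sqrt_iff hc]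
          simp [sq_abs]
        simp only [Set.mem_preimage, Set.mem_setOf_eq, mem_closedBall, dist_zero_right]
        exact this.symm
      have hmeas : MeasurableSet {y : Fin (m+1) → ℝ | ∑ i, y i ^ 2 ≤ c} := by
        apply measurableSet_le _ measurable_const
        fun_prop
      rw [← (EuclideanSpace.volume_preserving_symm_measurableEquiv_toLp (Fin (m+1))).measure_preimage
        hmeas.nullMeasurableSet, hset, EuclideanSpace.volume_closedBall]
      rw [ENNReal.ofReal_mul (by positivity), ENNReal.ofReal_pow (Real.sqrt_nonneg _)]
      simp

lemma key_cov (m : ℕ) {c : ℝ} (hc0 : 0 ≤ c) (hc1 : c ≤ 1) :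
    incBeta (1 - c ^ 2) ((m : ℝ) / 2 + 1) (1 / 2) =
      2 * ∫ s in c..1, Real.sqrt (1 - s ^ 2) ^ m := by
  have hx0 : (0:ℝ) ≤ 1 - c ^ 2 := by nlinarith
  have himage : (fun s : ℝ => 1 - s ^ 2) '' Set.Ioo c 1 = Set.Ioo 0 (1 - c ^ 2) := by
    ext τ
    constructor
    · rintro ⟨s, ⟨hs1, hs2⟩, rfl⟩
      dsimp only
      constructor <;> nlinarith
    · rintro ⟨hτ1, hτ2⟩
      refine ⟨Real.sqrt (1 - τ), ⟨?_, ?_⟩, ?_⟩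
      · exact (Real.lt_sqrt hc0).mpr (by nlinarith)
      · have h1 : (1:ℝ) - τ < 1 := by nlinarith
        have := Real.sqrt_lt_sqrt (by nlinarith) h1
        simpa using this
      · show 1 - Real.sqrt (1 - τ) ^ 2 = τ
        rw [Real.sq_sqrt (by nlinarith)]; ring
  have hderiv : ∀ s ∈ Set.Ioo c 1, HasDerivWithinAt (fun s : ℝ => 1 - s ^ 2)
      (-(2 * s)) (Set.Ioo c 1) s := by
    intro s _
    have h : HasDerivAt (fun s : ℝ => 1 - s ^ 2) (0 - 2 * s ^ 1) s :=
      (hasDerivAt_const s 1).sub (hasDerivAt_pow 2 s)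
    simpa using h.hasDerivWithinAt
  have hinj : Set.InjOn (fun s : ℝ => 1 - s ^ 2) (Set.Ioo c 1) := by
    intro s hs t ht h
    simp only at h
    have h2 : s ^ 2 = t ^ 2 := by linarith
    have hs0 : 0 ≤ s := le_trans hc0 hs.1.le
    have ht0 : 0 ≤ t := le_trans hc0 ht.1.le
    rw [← Real.sqrt_sq hs0, ← Real.sqrt_sq ht0, h2]
  have cov := integral_image_eq_integral_abs_deriv_smul measurableSet_Ioo hderiv hinj
    (fun τ => τ ^ ((m : ℝ) / 2) * (1 - τ) ^ (-(1/2) : ℝ))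
  rw [himage] at cov
  have hcongr : ∀ s ∈ Set.Ioo c 1,
      |(-(2 * s))| • ((fun τ => τ ^ ((m : ℝ) / 2) * (1 - τ) ^ (-(1/2) : ℝ)) (1 - s ^ 2)) =
      2 * Real.sqrt (1 - s ^ 2) ^ m := by
    intro s hs
    have hs0 : 0 < s := lt_of_le_of_lt hc0 hs.1
    have h1 : (0:ℝ) < 1 - s ^ 2 := by nlinarith [hs.2]
    have e1 : ((1:ℝ) - (1 - s ^ 2)) ^ (-(1/2) : ℝ) = s⁻¹ := by
      have : (1:ℝ) - (1 - s ^ 2) = s ^ 2 := by ring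
      rw [this, ← Real.rpow_natCast s 2, ← Real.rpow_mul hs0.le]
      norm_num
      exact Real.rpow_neg_one s
    have e2 : ((1:ℝ) - s ^ 2) ^ ((m : ℝ) / 2) = Real.sqrt (1 - s ^ 2) ^ m := by
      rw [Real.sqrt_eq_rpow, ← Real.rpow_natCast ((1 - s^2) ^ ((1:ℝ)/2)) m,
        ← Real.rpow_mul h1.le]
      ring_nf
    simp only [smul_eq_mul, abs_neg, abs_mul, abs_two, abs_of_pos hs0]
    rw [e1, e2]
    field_simp
  rw [setIntegral_congr_fun measurableSet_Ioo hcongr] at cov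
  have hIoo : ∫ s in Set.Ioo c 1, (2 * Real.sqrt (1 - s ^ 2) ^ m) =
      2 * ∫ s in c..1, Real.sqrt (1 - s ^ 2) ^ m := by
    rw [← integral_Ioc_eq_integral_Ioo, ← intervalIntegral.integral_of_le hc1,
      intervalIntegral.integral_const_mul]
  rw [hIoo] at cov
  rw [incBeta, intervalIntegral.integral_of_le hx0, integral_Ioc_eq_integral_Ioo, ← cov]
  apply setIntegral_congr_fun measurableSet_Ioo
  intro τ hτ
  norm_num

set_option maxHeartbeats 2000000 in
theorem volume_lens
    {n : ℕ} (hn : 1 ≤ n) (u : EuclideanSpace ℝ (Fin n)) (hu : ‖u‖ ≤ 2) :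
    (volume {v : EuclideanSpace ℝ (Fin n) |
        ‖v - (1 / 2 : ℝ) • u‖ ≤ 1 ∧ ‖v + (1 / 2 : ℝ) • u‖ ≤ 1}).toReal =
      Real.pi ^ ((n : ℝ) / 2) / Real.Gamma ((n : ℝ) / 2 + 1) *
        regIncBeta (1 - ‖u‖ ^ 2 / 4) (((n : ℝ) + 1) / 2) (1 / 2) := by
  obtain ⟨m, rfl⟩ : ∃ m, n = m + 1 := ⟨n - 1, (Nat.succ_pred_eq_of_pos hn).symm⟩
  classical
  have hd0 : (0:ℝ) ≤ ‖u‖ := norm_nonneg u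
  set c : ℝ := ‖u‖ / 2 with hcdef
  have hc0 : 0 ≤ c := by positivity
  have hc1 : c ≤ 1 := by rw [hcdef]; linarith
  set e0 : EuclideanSpace ℝ (Fin (m+1)) := EuclideanSpace.single (0 : Fin (m+1)) (1:ℝ) with he0
  set w : EuclideanSpace ℝ (Fin (m+1)) := ‖u‖ • e0 with hwdef
  have hw : ‖w‖ = ‖u‖ := by
    rw [hwdef, norm_smul, he0, EuclideanSpace.norm_single]
    simp [abs_of_nonneg hd0]
  set R := Submodule.reflection (ℝ ∙ (u - w))ᗮ with hR
  have hRu : R u = w := Submodule.reflection_sub hw.symm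
  have hhalf : (1/2 : ℝ) • w = c • e0 := by
    rw [hwdef, smul_smul, hcdef]; congr 1; ring
  set L : Set (EuclideanSpace ℝ (Fin (m+1))) :=
    {v | ‖v - c • e0‖ ≤ 1 ∧ ‖v + c • e0‖ ≤ 1} with hLdef
  have hLmeas : MeasurableSet L := by
    rw [hLdef, Set.setOf_and]
    exact (measurableSet_le (by fun_prop) measurable_const).inter
      (measurableSet_le (by fun_prop) measurable_const)
  have hpre : {v : EuclideanSpace ℝ (Fin (m+1)) |
      ‖v - (1/2:ℝ) • u‖ ≤ 1 ∧ ‖v + (1/2:ℝ) • u‖ ≤ 1} = R ⁻¹' L := by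
    ext v
    have h1 : ‖R v - c • e0‖ = ‖v - (1/2:ℝ) • u‖ := by
      rw [← hhalf, ← hRu, ← R.map_smul, ← R.map_sub, R.norm_map]
    have h2 : ‖R v + c • e0‖ = ‖v + (1/2:ℝ) • u‖ := by
      rw [← hhalf, ← hRu, ← R.map_smul, ← R.map_add, R.norm_map]
    simp only [hLdef, Set.mem_preimage, Set.mem_setOf_eq, h1, h2]
  rw [hpre, R.measurePreserving.measure_preimage hLmeas.nullMeasurableSet]
  -- move to ℝ × (Fin m → ℝ)
  set F := ((MeasurableEquiv.toLp 2 (Fin (m+1) → ℝ)).symm).trans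
      (MeasurableEquiv.piFinSuccAbove (fun _ : Fin (m+1) => ℝ) 0) with hF
  have hFmp : MeasurePreserving F volume volume :=
    (volume_preserving_piFinSuccAbove (fun _ : Fin (m+1) => ℝ) 0).comp
      (EuclideanSpace.volume_preserving_symm_measurableEquiv_toLp (Fin (m+1)))
  set T : Set (ℝ × (Fin m → ℝ)) := {p | (p.1 - c)^2 + ∑ j, p.2 j ^ 2 ≤ 1 ∧
      (p.1 + c)^2 + ∑ j, p.2 j ^ 2 ≤ 1} with hT
  have hTmeas : MeasurableSet T := by
    rw [hT, Set.setOf_and]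
    exact (measurableSet_le (by fun_prop) measurable_const).inter
      (measurableSet_le (by fun_prop) measurable_const)
  have hLT : L = F ⁻¹' T := by
    ext v
    have hnorm : ∀ z : EuclideanSpace ℝ (Fin (m+1)), ‖z‖ ≤ 1 ↔ ∑ i, z i ^ 2 ≤ 1 := by
      intro z
      rw [EuclideanSpace.norm_eq, show (1:ℝ) = Real.sqrt 1 from (Real.sqrt_one).symm,
        Real.sqrt_le_sqrt_iff zero_le_one, Real.sqrt_one]
      simp [sq_abs]
    have hsum1 : ∑ i, ((v - c • e0) i) ^ 2 = (v 0 - c) ^ 2 + ∑ j : Fin m, v j.succ ^ 2 := by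
      rw [Fin.sum_univ_succAbove _ 0]
      congr 1
      · simp [he0, EuclideanSpace.single_apply]
      · apply Finset.sum_congr rfl
        intro j _
        simp [he0, EuclideanSpace.single_apply, Fin.succ_ne_zero]
    have hsum2 : ∑ i, ((v + c • e0) i) ^ 2 = (v 0 + c) ^ 2 + ∑ j : Fin m, v j.succ ^ 2 := by
      rw [Fin.sum_univ_succAbove _ 0]
      congr 1
      · simp [he0, EuclideanSpace.single_apply]
      · apply Finset.sum_congr rfl
        intro j _
        simp [he0, EuclideanSpace.single_apply, Fin.succ_ne_zero]
    simp only [hLdef, hT, Set.mem_preimage, Set.mem_setOf_eq, hnorm, hsum1, hsum2, hF,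
      MeasurableEquiv.trans_apply, MeasurableEquiv.piFinSuccAbove_apply, Fin.succAbove_zero]
    rfl
  rw [hLT, hFmp.measure_preimage hTmeas.nullMeasurableSet, Measure.volume_eq_prod,
    Measure.prod_apply hTmeas]
  set a : ℝ := 1 - c with hadef
  have ha0 : 0 ≤ a := by rw [hadef]; linarith
  set Vm : ℝ := Real.sqrt π ^ m / Real.Gamma ((m:ℝ)/2 + 1) with hVmdef
  have hVm0 : 0 ≤ Vm := by
    rw [hVmdef]
    have := Real.Gamma_pos_of_pos (show (0:ℝ) < (m:ℝ)/2 + 1 by positivity)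
    positivity
  have hslice : ∀ t : ℝ, volume (Prod.mk t ⁻¹' T) =
      Set.indicator (Set.Icc (-a) a)
        (fun t => ENNReal.ofReal (Real.sqrt (1 - (|t| + c)^2) ^ m * Vm)) t := by
    intro t
    have hsliceset : Prod.mk t ⁻¹' T = {y : Fin m → ℝ | ∑ j, y j ^ 2 ≤ 1 - (|t| + c)^2} := by
      ext y
      simp only [hT, Set.mem_preimage, Set.mem_setOf_eq]
      constructor
      · rintro ⟨h1, h2⟩
        rcases abs_cases t with ⟨he, ht⟩ | ⟨he, ht⟩ <;> rw [he] <;> nlinarith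
      · intro h
        have hy : 0 ≤ ∑ j, y j ^ 2 := Finset.sum_nonneg fun j _ => sq_nonneg _
        rcases abs_cases t with ⟨he, ht⟩ | ⟨he, ht⟩ <;> rw [he] at h <;>
          constructor <;> nlinarith
    rw [hsliceset]
    by_cases habs : |t| ≤ a
    · have hmem : t ∈ Set.Icc (-a) a := Set.mem_Icc.mpr (abs_le.mp habs)
      have h0 : 0 ≤ 1 - (|t| + c)^2 := by nlinarith [abs_nonneg t]
      rw [Set.indicator_of_mem hmem, sliceVol m h0, hVmdef]
    · have hnot : t ∉ Set.Icc (-a) a := fun hmem => habs (abs_le.mpr (Set.mem_Icc.mp hmem))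
      have hempty : {y : Fin m → ℝ | ∑ j, y j ^ 2 ≤ 1 - (|t| + c)^2} = ∅ := by
        apply Set.eq_empty_iff_forall_notMem.mpr
        intro y hy
        have hy0 : 0 ≤ ∑ j, y j ^ 2 := Finset.sum_nonneg fun j _ => sq_nonneg _
        have hlt : a < |t| := not_le.mp habs
        have h1 : 1 < (|t| + c)^2 := by nlinarith [abs_nonneg t]
        simp only [Set.mem_setOf_eq] at hy
        nlinarith
      rw [hempty, measure_empty, Set.indicator_of_notMem hnot]
  rw [lintegral_congr hslice, lintegral_indicator measurableSet_Icc]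
  -- convert to a real integral
  have hg_cont : Continuous fun t : ℝ => Real.sqrt (1 - (|t| + c)^2) ^ m * Vm := by
    fun_prop
  have hnn : ∀ t : ℝ, 0 ≤ Real.sqrt (1 - (|t| + c)^2) ^ m * Vm := fun t => by positivity
  have h3 : ∫ t in Set.Icc (-a) a, (Real.sqrt (1 - (|t| + c)^2) ^ m * Vm)
      = (∫⁻ t in Set.Icc (-a) a,
          ENNReal.ofReal (Real.sqrt (1 - (|t| + c)^2) ^ m * Vm)).toReal := by
    rw [integral_eq_lintegral_of_nonneg_ae (ae_of_all _ hnn) hg_cont.aestronglyMeasurable]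
  rw [← h3]
  -- compute the real integral
  set H : ℝ → ℝ := fun t => Real.sqrt (1 - (|t| + c)^2) ^ m with hHdef
  have hHcont : Continuous H := by rw [hHdef]; fun_prop
  have heven : ∫ t in (-a)..(0:ℝ), H t = ∫ t in (0:ℝ)..a, H t := by
    have h := intervalIntegral.integral_comp_neg (a := (0:ℝ)) (b := a) (f := H)
    simp only [neg_zero] at h
    rw [← h]
    apply intervalIntegral.integral_congr
    intro x _
    simp [hHdef, abs_neg]
  have hpos : ∫ t in (0:ℝ)..a, H t = ∫ s in c..1, Real.sqrt (1 - s^2) ^ m := by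
    have h1 : ∫ t in (0:ℝ)..a, H t = ∫ t in (0:ℝ)..a, Real.sqrt (1 - (t + c)^2) ^ m := by
      apply intervalIntegral.integral_congr
      intro t ht
      rw [Set.uIcc_of_le ha0] at ht
      simp [hHdef, abs_of_nonneg ht.1]
    rw [h1, intervalIntegral.integral_comp_add_right (fun s => Real.sqrt (1 - s^2) ^ m) c]
    norm_num [hadef]
  have hsplit : ∫ t in (-a)..a, H t = 2 * ∫ s in c..1, Real.sqrt (1 - s^2) ^ m := by
    rw [← intervalIntegral.integral_add_adjacent_intervals
      (hHcont.intervalIntegrable (-a) 0) (hHcont.intervalIntegrable 0 a),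
      heven, hpos]
    ring
  have hIcc : ∫ t in Set.Icc (-a) a, (Real.sqrt (1 - (|t| + c)^2) ^ m * Vm)
      = Vm * (2 * ∫ s in c..1, Real.sqrt (1 - s^2) ^ m) := by
    rw [integral_Icc_eq_integral_Ioc,
      ← intervalIntegral.integral_of_le (by linarith : -a ≤ a)]
    rw [show (fun t => Real.sqrt (1 - (|t| + c)^2) ^ m * Vm) = fun t => H t * Vm from rfl]
    rw [intervalIntegral.integral_mul_const, hsplit]
    ring
  rw [hIcc, ← key_cov m hc0 hc1]
  -- final constants
  have e1 : (1:ℝ) - ‖u‖^2/4 = 1 - c^2 := by rw [hcdef]; ring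
  have e2 : (((m+1:ℕ):ℝ) + 1)/2 = (m:ℝ)/2 + 1 := by push_cast; ring
  rw [e1, e2, regIncBeta, betaFn]
  have hsum : (m:ℝ)/2 + 1 + 1/2 = ((m+1:ℕ):ℝ)/2 + 1 := by push_cast; ring
  rw [Real.Gamma_one_half_eq, hsum]
  have hG1 : 0 < Real.Gamma ((m:ℝ)/2 + 1) :=
    Real.Gamma_pos_of_pos (by positivity)
  have hG2 : 0 < Real.Gamma (((m+1:ℕ):ℝ)/2 + 1) :=
    Real.Gamma_pos_of_pos (by positivity)
  have hpi : Real.pi ^ (((m+1:ℕ):ℝ)/2) = Real.sqrt π ^ m * Real.sqrt π := by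
    rw [Real.sqrt_eq_rpow, ← Real.rpow_natCast (π ^ ((1:ℝ)/2)) m, ← Real.rpow_mul pi_pos.le,
      ← Real.rpow_add pi_pos]
    push_cast
    ring_nf
  rw [hpi, hVmdef]
  have hsπ : (0:ℝ) < Real.sqrt π := Real.sqrt_pos.mpr pi_pos
  field_simp
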